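/- If a sequential procedure with stopping time τ based on i.i.d. Bernoulli(p) samples satisfies the uniform resampling risk bound sup_{p∈[0,1]} RR_p ≤ ε for some ε < 1/2 (with RR defined relative to threshold α ∈ (0,1)), and if p is drawn from a prior distribution that puts positive density in a neighborhood of α, then E[τ] = ∞. -/

import Mathlib

open MeasureTheory ProbabilityTheory ENNReal



noncomputable def stmt19Bern (p : ℝ) (k : ℕ) : ℝ≥0∞ :=
  if k = 1 then ENNReal.ofReal p else if k = 0 then ENNReal.ofReal (1 - p) else 0

lemma stmt19_single {Ω : Type*} [MeasurableSpace Ω] (m : Measure Ω) [IsProbabilityMeasure m]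
    (X : ℕ → Ω → ℕ) (hmeas : ∀ i, Measurable (X i)) (hval : ∀ i ω, X i ω ≤ 1)
    (p : ℝ) (hp0 : 0 ≤ p) (hdist : ∀ i, m {ω | X i ω = 1} = ENNReal.ofReal p)
    (j k : ℕ) : m (X j ⁻¹' {k}) = stmt19Bern p k := by
  match k with
  | 1 =>
    have : X j ⁻¹' {1} = {ω | X j ω = 1} := by ext ω; simp
    rw [this, hdist]; simp [stmt19Bern]
  | 0 =>
    have h1 : X j ⁻¹' {0} = {ω | X j ω = 1}ᶜ := by
      ext ω; have := hval j ω; simp only [Set.mem_preimage, Set.mem_singleton_iff,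
        Set.mem_compl_iff, Set.mem_setOf_eq]; omega
    have hm1 : MeasurableSet {ω | X j ω = 1} := hmeas j (measurableSet_singleton 1)
    rw [h1, measure_compl hm1 (measure_ne_top m _), hdist, measure_univ]
    simp only [stmt19Bern, if_pos rfl, ENNReal.ofReal_sub 1 hp0, ENNReal.ofReal_one]
    norm_num
  | (k+2) =>
    have : X j ⁻¹' {k+2} = ∅ := by
      ext ω; have := hval j ω; simp only [Set.mem_preimage, Set.mem_singleton_iff,
        Set.mem_empty_iff_false, iff_false]; omega
    rw [this]; simp [stmt19Bern]

lemma stmt19_atom {Ω : Type*} [MeasurableSpace Ω] (m : Measure Ω) [IsProbabilityMeasure m]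
    (X : ℕ → Ω → ℕ) (hmeas : ∀ i, Measurable (X i)) (hval : ∀ i ω, X i ω ≤ 1)
    (hindep : iIndepFun X m)
    (p : ℝ) (hp0 : 0 ≤ p) (hdist : ∀ i, m {ω | X i ω = 1} = ENNReal.ofReal p)
    (n : ℕ) (x : Fin n → ℕ) :
    m {ω | ∀ i : Fin n, X i ω = x i} = ∏ i, stmt19Bern p (x i) := by
  classical
  set y : ℕ → ℕ := fun i => if h : i < n then x ⟨i, h⟩ else 0 with hy
  have hset : {ω | ∀ i : Fin n, X i ω = x i} = ⋂ i ∈ Finset.range n, X i ⁻¹' {y i} := by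
    ext ω
    simp only [Set.mem_setOf_eq, Set.mem_iInter, Finset.mem_range, Set.mem_preimage,
      Set.mem_singleton_iff]
    constructor
    · intro h i hi; simp only [hy, dif_pos hi]; exact h ⟨i, hi⟩
    · intro h i; have := h i i.isLt; simpa only [hy, dif_pos i.isLt] using this
  rw [hset, hindep.meas_biInter (fun i _ => ⟨{y i}, measurableSet_singleton _, rfl⟩)]
  rw [← Fin.prod_univ_eq_prod_range (fun i => m (X i ⁻¹' {y i})) n]
  refine Finset.prod_congr rfl fun i _ => ?_
  rw [stmt19_single m X hmeas hval p hp0 hdist]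
  congr 1
  simp only [hy, dif_pos i.isLt]

lemma stmt19_factor (p q r : ℝ) (hr : 0 ≤ r) (hrp : r * p ≤ q) (hrm : r * (1 - p) ≤ 1 - q)
    (k : ℕ) : ENNReal.ofReal r * stmt19Bern p k ≤ stmt19Bern q k := by
  unfold stmt19Bern
  rcases eq_or_ne k 1 with h1 | h1
  · subst h1; simp only [if_pos rfl, if_true, ← ENNReal.ofReal_mul hr]
    exact ENNReal.ofReal_le_ofReal hrp
  rcases eq_or_ne k 0 with h0 | h0
  · subst h0; simp only [if_neg (by norm_num : (0:ℕ) ≠ 1), if_pos rfl, if_true, ← ENNReal.ofReal_mul hr]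
    exact ENNReal.ofReal_le_ofReal hrm
  · simp [h1, h0]

lemma stmt19_cyl {Ω : Type*} [MeasurableSpace Ω] (m m' : Measure Ω)
    [IsProbabilityMeasure m] [IsProbabilityMeasure m']
    (X : ℕ → Ω → ℕ) (hmeas : ∀ i, Measurable (X i)) (hval : ∀ i ω, X i ω ≤ 1)
    (hindep : iIndepFun X m)
    (hindep' : iIndepFun X m')
    (p q r : ℝ) (hp0 : 0 ≤ p) (hq0 : 0 ≤ q) (hr : 0 ≤ r)
    (hrp : r * p ≤ q) (hrm : r * (1 - p) ≤ 1 - q)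
    (hdist : ∀ i, m {ω | X i ω = 1} = ENNReal.ofReal p)
    (hdist' : ∀ i, m' {ω | X i ω = 1} = ENNReal.ofReal q)
    (n : ℕ) (A : Set Ω)
    (hA : MeasurableSet[MeasurableSpace.comap (fun ω (i : Fin n) => X i ω) inferInstance] A) :
    ENNReal.ofReal r ^ n * m A ≤ m' A := by
  obtain ⟨S, -, rfl⟩ := hA
  have hdecomp : (fun ω (i : Fin n) => X i ω) ⁻¹' S
      = ⋃ x : S, {ω | ∀ i : Fin n, X i ω = (x : Fin n → ℕ) i} := by
    ext ω
    simp only [Set.mem_preimage, Set.mem_iUnion, Set.mem_setOf_eq, Subtype.exists]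
    constructor
    · intro h; exact ⟨_, h, fun i => rfl⟩
    · rintro ⟨x, hx, h⟩
      have : (fun i : Fin n => X i ω) = x := funext h
      rwa [this]
  have hmeasatom : ∀ x : Fin n → ℕ, MeasurableSet {ω | ∀ i : Fin n, X i ω = x i} := by
    intro x
    have : {ω | ∀ i : Fin n, X i ω = x i} = ⋂ i : Fin n, X i ⁻¹' {x i} := by
      ext ω; simp
    rw [this]
    exact MeasurableSet.iInter fun i => hmeas i (measurableSet_singleton _)
  have hdisj : Pairwise (Function.onFun Disjoint
      fun x : S => {ω | ∀ i : Fin n, X i ω = (x : Fin n → ℕ) i}) := by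
    intro x y hxy
    refine Set.disjoint_left.2 fun ω hx hy' => hxy ?_
    ext1
    exact funext fun i => (hx i).symm.trans (hy' i)
  have hμ : ∀ (ν : Measure Ω), ν ((fun ω (i : Fin n) => X i ω) ⁻¹' S)
      = ∑' x : S, ν {ω | ∀ i : Fin n, X i ω = (x : Fin n → ℕ) i} := by
    intro ν
    rw [hdecomp, measure_iUnion hdisj fun x => hmeasatom _]
  rw [hμ m, hμ m', ← ENNReal.tsum_mul_left]
  refine ENNReal.tsum_le_tsum fun x => ?_
  rw [stmt19_atom m X hmeas hval hindep p hp0 hdist n _,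
    stmt19_atom m' X hmeas hval hindep' q hq0 hdist' n _]
  calc ENNReal.ofReal r ^ n * ∏ i, stmt19Bern p ((x : Fin n → ℕ) i)
      = ∏ i : Fin n, (ENNReal.ofReal r * stmt19Bern p ((x : Fin n → ℕ) i)) := by
        rw [Finset.prod_mul_distrib, Finset.prod_const, Finset.card_univ, Fintype.card_fin]
    _ ≤ ∏ i : Fin n, stmt19Bern q ((x : Fin n → ℕ) i) :=
        Finset.prod_le_prod' fun i _ => stmt19_factor p q r hr hrp hrm _

lemma stmt19_tailsum {Ω : Type*} [MeasurableSpace Ω] (m : Measure Ω) (τ : Ω → ℕ∞)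
    (hmτ : ∀ n : ℕ, MeasurableSet {ω | (n : ℕ∞) < τ ω}) (M : ℕ) :
    ∑ n ∈ Finset.range M, m {ω | (n : ℕ∞) < τ ω} ≤ ∫⁻ ω, (τ ω : ℝ≥0∞) ∂m := by
  classical
  have h1 : ∀ n : ℕ, m {ω | (n : ℕ∞) < τ ω}
      = ∫⁻ ω, Set.indicator {ω | (n : ℕ∞) < τ ω} (1 : Ω → ℝ≥0∞) ω ∂m := by
    intro n; exact (lintegral_indicator_one (hmτ n)).symm
  calc ∑ n ∈ Finset.range M, m {ω | (n : ℕ∞) < τ ω}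
      = ∫⁻ ω, ∑ n ∈ Finset.range M,
          Set.indicator {ω | (n : ℕ∞) < τ ω} (1 : Ω → ℝ≥0∞) ω ∂m := by
        rw [lintegral_finset_sum]
        · exact Finset.sum_congr rfl fun n _ => h1 n
        · exact fun n _ => (measurable_const.indicator (hmτ n))
    _ ≤ ∫⁻ ω, (τ ω : ℝ≥0∞) ∂m := by
        refine lintegral_mono fun ω => ?_
        cases hτ : τ ω with
        | top => simp [le_top]
        | coe k =>
          have hind : ∀ n : ℕ, Set.indicator {ω | (n : ℕ∞) < τ ω} (1 : Ω → ℝ≥0∞) ω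
              = if n < k then 1 else 0 := by
            intro n
            by_cases h : n < k
            · rw [Set.indicator_of_mem]
              · simp [h]
              · simp only [Set.mem_setOf_eq, hτ]; exact_mod_cast h
            · rw [Set.indicator_of_notMem]
              · simp [h]
              · simp only [Set.mem_setOf_eq, hτ, not_lt]; exact_mod_cast not_lt.1 h
          simp only [hind]
          rw [Finset.sum_boole]
          have hcard : ((Finset.range M).filter (fun n => n < k)).card ≤ k := by
            have : (Finset.range M).filter (fun n => n < k) ⊆ Finset.range k := by
              intro n hn
              simp only [Finset.mem_filter] at hn
              exact Finset.mem_range.2 hn.2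
            simpa using Finset.card_le_card this
          simp only [ENat.toENNReal_coe]
          exact_mod_cast hcard

lemma stmt19_div (a b : ℝ) (hab : a < b) :
    ∫⁻ x in Set.Ioo a b, ENNReal.ofReal ((x - a)⁻¹) ∂volume = ⊤ := by
  by_contra h
  have hfin : (∫⁻ x in Set.Ioo a b, ENNReal.ofReal ((x - a)⁻¹) ∂volume) < ⊤ :=
    lt_top_iff_ne_top.2 h
  have hnonneg : 0 ≤ᵐ[volume.restrict (Set.Ioo a b)] fun x => (x - a)⁻¹ := by
    refine (ae_restrict_iff' measurableSet_Ioo).2 (ae_of_all _ fun x hx => ?_)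
    have : 0 < x - a := sub_pos.2 hx.1
    positivity
  have hint : IntegrableOn (fun x => (x - a)⁻¹) (Set.Ioo a b) volume := by
    refine ⟨((measurable_id.sub_const a).inv).aestronglyMeasurable, ?_⟩
    rw [hasFiniteIntegral_iff_ofReal hnonneg]
    exact hfin
  have hIoc : IntegrableOn (fun x => (x - a)⁻¹) (Set.Ioc a b) volume :=
    (integrableOn_Ioc_iff_integrableOn_Ioo (by simp)).2 hint
  have : IntervalIntegrable (fun x => (x - a)⁻¹) volume a b :=
    (intervalIntegrable_iff_integrableOn_Ioc_of_le hab.le).2 hIoc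
  rw [intervalIntegrable_sub_inv_iff] at this
  rcases this with h1 | h2
  · exact absurd h1 hab.ne
  · exact h2 Set.left_mem_uIcc


/-- Wald-type lower bound: a sequential procedure observing i.i.d. Bernoulli(p) samples
(`μ p` is the law of the sample path under success probability `p`), with stopping time `τ`
adapted to the natural filtration of the samples and decision `D` (`true` = decide `p > α`)
determined by the samples observed up to time `τ`, which has resampling risk uniformly
bounded by some `ε < 1/2`, must have infinite expected stopping time under any prior `π`
with positive density in a neighbourhood of `α`. -/
theorem stmt19
    (Ω : Type*) [MeasurableSpace Ω]
    (μ : ℝ → Measure Ω) (hprob : ∀ p ∈ Set.Icc (0:ℝ) 1, IsProbabilityMeasure (μ p))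
    (X : ℕ → Ω → ℕ)
    (hmeas : ∀ i, Measurable (X i))
    (hval : ∀ i ω, X i ω ≤ 1)
    (hindep : ∀ p ∈ Set.Icc (0:ℝ) 1, iIndepFun X (μ p))
    (hdist : ∀ p ∈ Set.Icc (0:ℝ) 1, ∀ i, μ p {ω | X i ω = 1} = ENNReal.ofReal p)
    -- the natural filtration generated by the first `n` samples
    (ℱ : ℕ → MeasurableSpace Ω)
    (hℱ : ∀ n, ℱ n = MeasurableSpace.comap (fun ω (i : Fin n) => X i ω) inferInstance)
    -- the stopping time and the decision based on the samples up to time `τ`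
    (τ : Ω → ℕ∞) (D : Ω → Bool)
    (hstop : ∀ n : ℕ, MeasurableSet[ℱ n] {ω | τ ω ≤ (n : ℕ∞)})
    (hdec : ∀ n : ℕ, MeasurableSet[ℱ n] {ω | τ ω ≤ (n : ℕ∞) ∧ D ω = true})
    -- uniform bound on the resampling risk at threshold `α` by `ε < 1/2`
    (α ε : ℝ) (hα : α ∈ Set.Ioo (0:ℝ) 1) (hε : 0 ≤ ε) (hε2 : ε < 1 / 2)
    (hRR : ∀ p ∈ Set.Icc (0:ℝ) 1,
      (if p ≤ α then μ p {ω | D ω = true} else μ p {ω | D ω = false})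
        ≤ ENNReal.ofReal ε)
    -- a prior on `p` with positive density in a neighbourhood of `α`
    (π : Measure ℝ) [IsProbabilityMeasure π] (hπsupp : π (Set.Icc (0:ℝ) 1)ᶜ = 0)
    (hπdens : ∃ c > (0:ℝ), ∃ δ > (0:ℝ), ∀ s : Set ℝ, MeasurableSet s →
      s ⊆ Set.Ioo (α - δ) (α + δ) → ENNReal.ofReal c * MeasureTheory.volume s ≤ π s) :
    ∫⁻ p, (∫⁻ ω, (τ ω : ℝ≥0∞) ∂(μ p)) ∂π = ⊤ := by
  obtain ⟨c, hc, δ, hδ, hπd⟩ := hπdens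
  obtain ⟨hα0, hα1⟩ := hα
  set δ' : ℝ := min δ (1 - α) with hδ'def
  have hδ'0 : 0 < δ' := lt_min hδ (by linarith)
  have hb1 : α + δ' ≤ 1 := by
    have := min_le_right δ (1 - α); simp only [hδ'def]; linarith
  set C : ℝ := α * (1 - 2*ε) * (1/2 - ε) with hCdef
  have hC0 : 0 < C := by
    exact _root_.mul_pos (_root_.mul_pos hα0 (by linarith)) (by linarith)
  have hle : ∀ n, ℱ n ≤ ‹MeasurableSpace Ω› := by
    intro n; rw [hℱ n]
    exact (measurable_pi_lambda (fun ω (i : Fin n) => X i ω) fun i => hmeas i).comap_le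
  have hταmeas : ∀ n : ℕ, MeasurableSet {ω | (n : ℕ∞) < τ ω} := by
    intro n
    have : {ω | (n : ℕ∞) < τ ω} = {ω | τ ω ≤ (n : ℕ∞)}ᶜ := by
      ext ω; simp [not_le]
    rw [this]; exact ((hle n) _ (hstop n)).compl
  have hαI : α ∈ Set.Icc (0:ℝ) 1 := ⟨hα0.le, hα1.le⟩
  haveI := hprob α hαI
  -- key pointwise bound
  have key : ∀ p ∈ Set.Ioo α (α + δ'),
      ENNReal.ofReal C * ENNReal.ofReal ((p - α)⁻¹) ≤ ∫⁻ ω, (τ ω : ℝ≥0∞) ∂(μ p) := by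
    intro p hp
    have hpα : α < p := hp.1
    have hp1 : p ≤ 1 := le_trans hp.2.le hb1
    have hpI : p ∈ Set.Icc (0:ℝ) 1 := ⟨by linarith, hp1⟩
    haveI := hprob p hpI
    set N : ℕ := ⌊α * (1 - 2*ε) / (p - α)⌋₊ with hNdef
    have hgap : 0 < p - α := by linarith
    have htail : ∀ n ∈ Finset.range (N+1),
        ENNReal.ofReal (1/2 - ε) ≤ μ p {ω | (n : ℕ∞) < τ ω} := by
      intro n hn
      have hnN : n ≤ N := Nat.lt_succ_iff.1 (Finset.mem_range.1 hn)
      have hnle : (n : ℝ) * (p - α) ≤ α * (1 - 2*ε) := by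
        have h1 : (n : ℝ) ≤ α * (1 - 2*ε) / (p - α) :=
          le_trans (Nat.cast_le.2 hnN) (Nat.floor_le (le_of_lt (div_pos (_root_.mul_pos hα0 (by linarith)) hgap)))
        calc (n : ℝ) * (p - α) ≤ (α * (1 - 2*ε) / (p - α)) * (p - α) :=
              mul_le_mul_of_nonneg_right h1 hgap.le
          _ = α * (1 - 2*ε) := by field_simp
      -- likelihood ratio bound
      have hr0 : 0 ≤ α / p := div_nonneg hα0.le (by linarith)
      have hrp : (α / p) * p ≤ α := le_of_eq (div_mul_cancel₀ α (show p ≠ 0 by linarith))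
      have hrm : (α / p) * (1 - p) ≤ 1 - α := by
        rw [div_mul_eq_mul_div, div_le_iff₀ (by linarith : (0:ℝ) < p)]
        nlinarith
      have hA : MeasurableSet[MeasurableSpace.comap (fun ω (i : Fin n) => X i ω)
          inferInstance] {ω | τ ω ≤ (n : ℕ∞) ∧ D ω = true} := by
        rw [← hℱ n]; exact hdec n
      have hcyl := stmt19_cyl (μ p) (μ α) X hmeas hval (hindep p hpI) (hindep α hαI)
        p α (α / p) (by linarith) hα0.le hr0 hrp hrm
        (hdist p hpI) (hdist α hαI) n _ hA
      have hμαA : μ α {ω | τ ω ≤ (n : ℕ∞) ∧ D ω = true} ≤ ENNReal.ofReal ε := by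
        have hsub : {ω | τ ω ≤ (n : ℕ∞) ∧ D ω = true} ⊆ {ω | D ω = true} :=
          fun ω hω => hω.2
        have h2 := hRR α hαI
        rw [if_pos le_rfl] at h2
        exact le_trans (measure_mono hsub) h2
      have hpow : ENNReal.ofReal (2*ε) ≤ ENNReal.ofReal (α / p) ^ n := by
        rw [← ENNReal.ofReal_pow hr0]
        apply ENNReal.ofReal_le_ofReal
        have h1 : 1 + (n : ℝ) * (α/p - 1) ≤ (1 + (α/p - 1)) ^ n :=
          one_add_mul_le_pow (by
            have : 0 ≤ α / p := hr0
            linarith) n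
        have h2 : (1:ℝ) + (α/p - 1) = α / p := by ring
        rw [h2] at h1
        refine le_trans ?_ h1
        have hppos : (0:ℝ) < p := by linarith
        have h3 : (n : ℝ) * (1 - α/p) ≤ 1 - 2*ε := by
          rw [show (1:ℝ) - α/p = (p - α)/p by field_simp]
          rw [← mul_div_assoc, div_le_iff₀ hppos]
          nlinarith
        linarith
      have hApbound : μ p {ω | τ ω ≤ (n : ℕ∞) ∧ D ω = true} ≤ ENNReal.ofReal (1/2) := by
        rcases eq_or_lt_of_le hε with hε0 | hε0
        · -- ε = 0
          have hz : μ α {ω | τ ω ≤ (n : ℕ∞) ∧ D ω = true} = 0 := by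
            refine le_antisymm ?_ zero_le
            simpa [← hε0] using hμαA
          have hfac : (ENNReal.ofReal (α / p)) ^ n ≠ 0 :=
            pow_ne_zero _ (ENNReal.ofReal_pos.2 (div_pos hα0 (by linarith))).ne'
          have := le_trans hcyl (le_of_eq hz)
          have := (mul_eq_zero.1 (le_antisymm this zero_le))
          rcases this with h | h
          · exact absurd h hfac
          · rw [h]; exact zero_le
        · -- ε > 0
          have hchain : ENNReal.ofReal (2*ε) * μ p {ω | τ ω ≤ (n : ℕ∞) ∧ D ω = true}
              ≤ ENNReal.ofReal ε :=
            le_trans (mul_le_mul_left hpow _) (le_trans hcyl hμαA)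
          have h2ε : ENNReal.ofReal (2*ε) ≠ 0 := (ENNReal.ofReal_pos.2 (by linarith)).ne'
          have hchain' : μ p {ω | τ ω ≤ (n : ℕ∞) ∧ D ω = true} * ENNReal.ofReal (2*ε)
              ≤ ENNReal.ofReal ε := by rw [mul_comm]; exact hchain
          have hdivle := (ENNReal.le_div_iff_mul_le (Or.inl h2ε)
            (Or.inl ENNReal.ofReal_ne_top)).2 hchain'
          refine le_trans hdivle ?_
          rw [← ENNReal.ofReal_div_of_pos (by linarith)]
          apply ENNReal.ofReal_le_ofReal
          rw [div_le_iff₀ (by linarith : (0:ℝ) < 2*ε)]; linarith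
      have hDfalse : μ p {ω | D ω = false} ≤ ENNReal.ofReal ε := by
        have := hRR p hpI; rwa [if_neg (not_le.2 hpα)] at this
      have hcover : (Set.univ : Set Ω) ⊆ {ω | D ω = false}
          ∪ ({ω | τ ω ≤ (n : ℕ∞) ∧ D ω = true} ∪ {ω | (n : ℕ∞) < τ ω}) := by
        intro ω _
        by_cases hD : D ω = true
        · by_cases hτn : τ ω ≤ (n : ℕ∞)
          · exact Or.inr (Or.inl ⟨hτn, hD⟩)
          · exact Or.inr (Or.inr (not_le.1 hτn))
        · exact Or.inl (by simpa using hD)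
      have h1le : (1:ℝ≥0∞) ≤ ENNReal.ofReal (ε + 1/2) + μ p {ω | (n : ℕ∞) < τ ω} := by
        calc (1:ℝ≥0∞) = μ p Set.univ := measure_univ.symm
          _ ≤ μ p ({ω | D ω = false}
              ∪ ({ω | τ ω ≤ (n : ℕ∞) ∧ D ω = true} ∪ {ω | (n : ℕ∞) < τ ω})) :=
              measure_mono hcover
          _ ≤ μ p {ω | D ω = false}
              + (μ p {ω | τ ω ≤ (n : ℕ∞) ∧ D ω = true} + μ p {ω | (n : ℕ∞) < τ ω}) :=
              le_trans (measure_union_le _ _) (add_le_add_right (measure_union_le _ _) _)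
          _ ≤ ENNReal.ofReal ε + (ENNReal.ofReal (1/2) + μ p {ω | (n : ℕ∞) < τ ω}) :=
              add_le_add hDfalse (add_le_add hApbound le_rfl)
          _ = ENNReal.ofReal (ε + 1/2) + μ p {ω | (n : ℕ∞) < τ ω} := by
              rw [ENNReal.ofReal_add hε (by norm_num), add_assoc]
      have heq : ENNReal.ofReal (1/2 - ε) = 1 - ENNReal.ofReal (ε + 1/2) := by
        rw [← ENNReal.ofReal_one, ← ENNReal.ofReal_sub _ (by linarith),
          show (1:ℝ) - (ε + 1/2) = 1/2 - ε from by ring]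
      rw [heq]
      exact tsub_le_iff_left.2 h1le
    -- assemble the per-p bound
    calc ENNReal.ofReal C * ENNReal.ofReal ((p - α)⁻¹)
        = ENNReal.ofReal (α * (1 - 2*ε) / (p - α) * (1/2 - ε)) := by
          rw [← ENNReal.ofReal_mul hC0.le]
          congr 1
          rw [hCdef]
          field_simp
      _ ≤ ENNReal.ofReal (((N : ℝ) + 1) * (1/2 - ε)) := by
          apply ENNReal.ofReal_le_ofReal
          apply mul_le_mul_of_nonneg_right _ (by linarith)
          exact_mod_cast (Nat.lt_succ_floor _).le
      _ = ((N + 1 : ℕ) : ℝ≥0∞) * ENNReal.ofReal (1/2 - ε) := by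
          rw [← ENNReal.ofReal_natCast (N+1), ← ENNReal.ofReal_mul (by positivity)]
          congr 1
          push_cast; ring
      _ = ∑ _n ∈ Finset.range (N+1), ENNReal.ofReal (1/2 - ε) := by
          rw [Finset.sum_const, Finset.card_range, nsmul_eq_mul]
      _ ≤ ∑ n ∈ Finset.range (N+1), μ p {ω | (n : ℕ∞) < τ ω} :=
          Finset.sum_le_sum htail
      _ ≤ ∫⁻ ω, (τ ω : ℝ≥0∞) ∂(μ p) := stmt19_tailsum (μ p) τ hταmeas (N+1)
  -- assemble the integral over the prior
  have hIooδ : Set.Ioo α (α + δ') ⊆ Set.Ioo (α - δ) (α + δ) := by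
    intro x hx
    constructor
    · linarith [hx.1]
    · have := min_le_left δ (1 - α)
      have h2 := hx.2
      simp only [hδ'def] at h2 ⊢
      linarith
  have hmeasmono : (ENNReal.ofReal c • volume).restrict (Set.Ioo α (α+δ'))
      ≤ π.restrict (Set.Ioo α (α+δ')) := by
    refine Measure.le_iff.2 fun s hs => ?_
    rw [Measure.restrict_apply hs, Measure.restrict_apply hs, Measure.smul_apply, smul_eq_mul]
    exact hπd _ (hs.inter measurableSet_Ioo) (Set.inter_subset_right.trans hIooδ)
  have hdivtop : ∫⁻ x in Set.Ioo α (α+δ'),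
      ENNReal.ofReal C * ENNReal.ofReal ((x-α)⁻¹) ∂(ENNReal.ofReal c • volume) = ⊤ := by
    rw [Measure.restrict_smul, lintegral_smul_measure,
      lintegral_const_mul' _ _ ENNReal.ofReal_ne_top,
      stmt19_div α (α+δ') (by linarith)]
    rw [ENNReal.mul_top (ENNReal.ofReal_pos.2 hC0).ne',
      smul_eq_mul, ENNReal.mul_top (ENNReal.ofReal_pos.2 hc).ne']
  rw [eq_top_iff]
  calc (⊤:ℝ≥0∞) = ∫⁻ x in Set.Ioo α (α+δ'),
        ENNReal.ofReal C * ENNReal.ofReal ((x-α)⁻¹) ∂(ENNReal.ofReal c • volume) :=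
        hdivtop.symm
    _ ≤ ∫⁻ x in Set.Ioo α (α+δ'),
        ENNReal.ofReal C * ENNReal.ofReal ((x-α)⁻¹) ∂π := by
        apply lintegral_mono'
        · exact hmeasmono
        · exact le_rfl
    _ ≤ ∫⁻ x in Set.Ioo α (α+δ'), (∫⁻ ω, (τ ω : ℝ≥0∞) ∂(μ x)) ∂π := by
        apply lintegral_mono_ae
        exact (ae_restrict_iff' measurableSet_Ioo).2 (ae_of_all _ key)
    _ ≤ ∫⁻ p, (∫⁻ ω, (τ ω : ℝ≥0∞) ∂(μ p)) ∂π :=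
        lintegral_mono' Measure.restrict_le_self le_rfl
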